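/- If a ground term t over {d, e, +, ·} is a normal form of the rewrite system R (rules: x+e→x, e+x→x, (x+y)+z→x+(y+z), (x+y)·z→y·(x·z), (d·x)·y→x·(y+x), e·x→x, d·e→e), then every subterm of t of the form u·v has u = d. In particular every application-term in normal form equals d·u for some normal form u ≠ e. -/
import Mathlib


/-- Ground terms over constants d, e with binary operations + (add) and · (app). -/
inductive Tm : Type
  | d : Tm
  | e : Tm
  | add : Tm → Tm → Tm
  | app : Tm → Tm → Tm
  deriving DecidableEq

open Tm

/-- Root rewrite steps: instances of the oriented rules. -/
inductive Root : Tm → Tm → Prop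
  | addE (x) : Root (add x e) x
  | eAdd (x) : Root (add e x) x
  | assoc (x y z) : Root (add (add x y) z) (add x (add y z))
  | appAdd (x y z) : Root (app (add x y) z) (app y (app x z))
  | appD (x y) : Root (app (app d x) y) (app x (add y x))
  | appE (x) : Root (app e x) x
  | dE : Root (app d e) e

/-- One rewrite step: a root step applied at some subterm position. -/
inductive Step : Tm → Tm → Prop
  | root {t u} : Root t u → Step t u
  | addL {t t' u} : Step t t' → Step (add t u) (add t' u)
  | addR {t u u'} : Step u u' → Step (add t u) (add t u')
  | appL {t t' u} : Step t t' → Step (app t u) (app t' u)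
  | appR {t u u'} : Step u u' → Step (app t u) (app t u')

/-- Zero or more rewrite steps. -/
def Steps : Tm → Tm → Prop := Relation.ReflTransGen Step

/-- A normal form is a term to which no rule applies. -/
def NormalForm (t : Tm) : Prop := ∀ u, ¬ Step t u

/-- Provable equality in the equational theory (reflexive symmetric transitive
congruence closure of the rule instances). -/
def TermEq : Tm → Tm → Prop := Relation.EqvGen Step

/-- The (reflexive) subterm relation. -/
inductive Subterm : Tm → Tm → Prop
  | refl (t) : Subterm t t
  | addL {s t u} : Subterm s t → Subterm s (add t u)
  | addR {s t u} : Subterm s u → Subterm s (add t u)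
  | appL {s t u} : Subterm s t → Subterm s (app t u)
  | appR {s t u} : Subterm s u → Subterm s (app t u)


lemma nf_addL {t u : Tm} (h : NormalForm (add t u)) : NormalForm t :=
  fun v hv => h (add v u) (Step.addL hv)

lemma nf_addR {t u : Tm} (h : NormalForm (add t u)) : NormalForm u :=
  fun v hv => h (add t v) (Step.addR hv)

lemma nf_appL {t u : Tm} (h : NormalForm (app t u)) : NormalForm t :=
  fun v hv => h (app v u) (Step.appL hv)

lemma nf_appR {t u : Tm} (h : NormalForm (app t u)) : NormalForm u :=
  fun v hv => h (app t v) (Step.appR hv)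

lemma nf_sub_head : ∀ t : Tm, NormalForm t → ∀ u v : Tm, Subterm (app u v) t → u = d := by
  intro t
  induction t with
  | d => intro _ u v h; cases h
  | e => intro _ u v h; cases h
  | add a b iha ihb =>
      intro hnf u v h
      cases h with
      | addL h => exact iha (nf_addL hnf) u v h
      | addR h => exact ihb (nf_addR hnf) u v h
  | app a b iha ihb =>
      intro hnf u v h
      cases h with
      | refl =>
          cases a with
          | d => rfl
          | e => exact absurd (Step.root (Root.appE b)) (hnf b)
          | add x y =>
              exact absurd (Step.root (Root.appAdd x y b)) (hnf _)
          | app x y =>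
              have hx : x = d := iha (nf_appL hnf) x y (Subterm.refl _)
              subst hx
              exact absurd (Step.root (Root.appD y b)) (hnf _)
      | appL h => exact iha (nf_appL hnf) u v h
      | appR h => exact ihb (nf_appR hnf) u v h

/-- in a normal form, every application subterm u·v has u = d;
in particular an application normal form is d·u with u a normal form, u ≠ e. -/
theorem nf_app_head_is_d :
    ∀ t : Tm, NormalForm t →
      (∀ u v : Tm, Subterm (app u v) t → u = d) ∧
      (∀ u v : Tm, t = app u v → u = d ∧ NormalForm v ∧ v ≠ e) := by
  intro t hnf
  refine ⟨nf_sub_head t hnf, ?_⟩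
  intro u v ht
  subst ht
  have hu : u = d := nf_sub_head _ hnf u v (Subterm.refl _)
  subst hu
  refine ⟨rfl, nf_appR hnf, ?_⟩
  intro hv; subst hv
  exact hnf e (Step.root Root.dE)
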